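/- arXiv:2407.02686 — 2 statements merged into one kernel-verified Lean document; each statement's English description precedes it below -/
import Mathlib

section
/- Let H be a real symmetric N×N matrix, e ∈ ℝ^N a unit vector, c > 0, and set A := H + c·(e eᵀ). Suppose μ ∈ ℝ and v ∈ ℝ^N with v ≠ 0 satisfy A v = μ v and μ > ‖H‖. Then the series Σ_{k=0}^∞ ⟨e, H^k e⟩/μ^k converges absolutely and μ = c·Σ_{k=0}^∞ ⟨e, H^k e⟩/μ^k. -/
open Matrix

/-- The ℓ²-operator norm of a real `N × N` matrix: the norm of the induced linear map
from Euclidean `ℝ^N` to Euclidean `ℝ^N` (the largest singular value). -/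
noncomputable def matrixL2OpNorm {N : ℕ} (M : Matrix (Fin N) (Fin N) ℝ) : ℝ :=
  ‖LinearMap.toContinuousLinearMap (Matrix.toEuclideanLin M)‖

private lemma inner_symm_dot {N : ℕ} (a b : Fin N → ℝ) :
    (inner ℝ ((WithLp.equiv 2 (Fin N → ℝ)).symm a) ((WithLp.equiv 2 (Fin N → ℝ)).symm b) : ℝ)
      = a ⬝ᵥ b := by
  simp [PiLp.inner_apply, dotProduct, RCLike.inner_apply, WithLp.equiv_symm_apply, mul_comm]

private lemma vecMulVec_mulVec' {N : ℕ} (e v : Fin N → ℝ) :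
    Matrix.vecMulVec e e *ᵥ v = (e ⬝ᵥ v) • e := by
  funext i
  simp [Matrix.mulVec, Matrix.vecMulVec, dotProduct, Finset.mul_sum, mul_assoc,
    mul_comm, mul_left_comm]


set_option maxHeartbeats 1000000 in
set_option synthInstance.maxHeartbeats 400000 in
/-- **Series representation of the principal eigenvalue of a rank-one perturbation.**
Let `H` be real symmetric, `e` a unit vector, `c > 0`, and `A = H + c e eᵀ`.
If `A v = μ v` with `v ≠ 0` and `μ > ‖H‖`, then `Σ_k ⟨e, H^k e⟩/μ^k` converges
absolutely and `μ = c Σ_{k=0}^∞ ⟨e, H^k e⟩/μ^k`. -/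
theorem stmt_14 (N : ℕ) (hN : 1 ≤ N)
    (H : Matrix (Fin N) (Fin N) ℝ) (hH : H.IsSymm)
    (e : Fin N → ℝ) (he : dotProduct e e = 1)
    (c : ℝ) (hc : 0 < c)
    (A : Matrix (Fin N) (Fin N) ℝ) (hA : A = H + c • Matrix.vecMulVec e e)
    (μ : ℝ) (v : Fin N → ℝ) (hv : v ≠ 0)
    (heig : A *ᵥ v = μ • v) (hμ : matrixL2OpNorm H < μ) :
    Summable (fun k : ℕ => |dotProduct e ((H ^ k) *ᵥ e) / μ ^ k|) ∧
      μ = c * ∑' k : ℕ, dotProduct e ((H ^ k) *ᵥ e) / μ ^ k := by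
  classical
  set T : EuclideanSpace ℝ (Fin N) →L[ℝ] EuclideanSpace ℝ (Fin N) :=
    Matrix.toEuclideanCLM (𝕜 := ℝ) H with hT
  have hTnorm : ‖T‖ = matrixL2OpNorm H := rfl
  have hμT : ‖T‖ < μ := hTnorm ▸ hμ
  have hμ0 : 0 < μ := (norm_nonneg T).trans_lt hμT
  set E : EuclideanSpace ℝ (Fin N) := (WithLp.equiv 2 (Fin N → ℝ)).symm e with hE
  set V : EuclideanSpace ℝ (Fin N) := (WithLp.equiv 2 (Fin N → ℝ)).symm v with hV
  have hTk : ∀ k : ℕ, (T ^ k) E = (WithLp.equiv 2 (Fin N → ℝ)).symm ((H ^ k) *ᵥ e) := by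
    intro k
    rw [hT, ← map_pow, hE]
    simpa [Matrix.toLin'_apply] using Matrix.toEuclideanCLM_toLp (𝕜 := ℝ) (H ^ k) e
  have hEnorm : ‖E‖ = 1 := by
    have h1 : (inner ℝ E E : ℝ) = 1 := by rw [hE, inner_symm_dot]; exact he
    have h2 : (inner ℝ E E : ℝ) = ‖E‖ ^ 2 := real_inner_self_eq_norm_sq E
    nlinarith [norm_nonneg E]
  -- summability
  have hbound : ∀ k : ℕ, |dotProduct e ((H ^ k) *ᵥ e) / μ ^ k| ≤ (‖T‖ / μ) ^ k := by
    intro k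
    rcases Nat.eq_zero_or_pos k with rfl | hk
    · rw [pow_zero, pow_zero, pow_zero, Matrix.one_mulVec, he]; norm_num
    · have h1 : dotProduct e ((H ^ k) *ᵥ e) = inner ℝ E ((T ^ k) E) := by
        rw [hTk, hE, inner_symm_dot]
      have h2 : |(inner ℝ E ((T ^ k) E) : ℝ)| ≤ ‖T‖ ^ k := by
        calc |(inner ℝ E ((T ^ k) E) : ℝ)| ≤ ‖E‖ * ‖(T ^ k) E‖ := abs_real_inner_le_norm _ _
          _ ≤ ‖E‖ * (‖T ^ k‖ * ‖E‖) := by gcongr; exact (T ^ k).le_opNorm E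
          _ = ‖T ^ k‖ := by rw [hEnorm]; ring
          _ ≤ ‖T‖ ^ k := norm_pow_le' T hk
      rw [abs_div, h1, abs_of_pos (pow_pos hμ0 k), div_pow]
      gcongr
  have hr0 : 0 ≤ ‖T‖ / μ := div_nonneg (norm_nonneg T) hμ0.le
  have hr1 : ‖T‖ / μ < 1 := (div_lt_one hμ0).2 hμT
  have hsum : Summable (fun k : ℕ => |dotProduct e ((H ^ k) *ᵥ e) / μ ^ k|) :=
    Summable.of_nonneg_of_le (fun k => abs_nonneg _) hbound
      (summable_geometric_of_lt_one hr0 hr1)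
  refine ⟨hsum, ?_⟩
  set x : ℝ := e ⬝ᵥ v with hx
  have hAv : (WithLp.equiv 2 (Fin N → ℝ)).symm (H *ᵥ v) + (c * x) • E = μ • V := by
    rw [hA, Matrix.add_mulVec, Matrix.smul_mulVec, vecMulVec_mulVec', smul_smul,
      ← hx] at heig
    have h := congrArg (WithLp.equiv 2 (Fin N → ℝ)).symm heig
    exact h
  have hTV : T V = (WithLp.equiv 2 (Fin N → ℝ)).symm (H *ᵥ v) := by
    rw [hT, hV]
    simpa [Matrix.toLin'_apply] using Matrix.toEuclideanCLM_toLp (𝕜 := ℝ) H v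
  set R : EuclideanSpace ℝ (Fin N) →L[ℝ] EuclideanSpace ℝ (Fin N) := μ⁻¹ • T with hR
  have hRnorm : ‖R‖ < 1 := by
    have hle : ‖R‖ ≤ ‖μ⁻¹‖ * ‖T‖ := hR ▸ ContinuousLinearMap.opNorm_smul_le μ⁻¹ T
    have : ‖μ⁻¹‖ * ‖T‖ = ‖T‖ / μ := by
      rw [Real.norm_eq_abs, abs_of_pos (inv_pos.2 hμ0), ← div_eq_inv_mul]
    exact lt_of_le_of_lt (this ▸ hle) hr1
  have hkey : (1 - R) V = (μ⁻¹ * (c * x)) • E := by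
    have h1 : (1 - R) V = V - μ⁻¹ • (T V) := by
      simp [hR, ContinuousLinearMap.sub_apply]
    have h2 : μ • V - T V = (c * x) • E := by
      rw [← hAv, hTV]; abel
    have h3 : V - μ⁻¹ • T V = μ⁻¹ • (μ • V - T V) := by
      rw [smul_sub, smul_smul, inv_mul_cancel₀ hμ0.ne', one_smul]
    rw [h1, h3, h2, smul_smul]
  have hsumR : Summable (fun n : ℕ => R ^ n) := summable_geometric_of_norm_lt_one hRnorm
  set u : (EuclideanSpace ℝ (Fin N) →L[ℝ] EuclideanSpace ℝ (Fin N))ˣ :=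
    Units.oneSub R hRnorm with hu
  have huval : (u : EuclideanSpace ℝ (Fin N) →L[ℝ] EuclideanSpace ℝ (Fin N)) = 1 - R := rfl
  have huinv : ((u⁻¹ : _ˣ) : EuclideanSpace ℝ (Fin N) →L[ℝ] EuclideanSpace ℝ (Fin N)) =
      ∑' n : ℕ, R ^ n := rfl
  have hrec : ∀ w : EuclideanSpace ℝ (Fin N),
      ((u⁻¹ : _ˣ) : EuclideanSpace ℝ (Fin N) →L[ℝ] EuclideanSpace ℝ (Fin N)) ((1 - R) w) = w := by
    intro w
    have h := congrArg
      (fun f : EuclideanSpace ℝ (Fin N) →L[ℝ] EuclideanSpace ℝ (Fin N) => f w) u.inv_mul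
    simpa [huval, ContinuousLinearMap.mul_apply] using h
  have hVne : V ≠ 0 := by
    intro h
    apply hv
    have h2 : (WithLp.equiv 2 (Fin N → ℝ)).symm v = 0 := hV ▸ h
    calc v = (WithLp.equiv 2 (Fin N → ℝ)) ((WithLp.equiv 2 (Fin N → ℝ)).symm v) :=
          (Equiv.apply_symm_apply _ _).symm
      _ = (WithLp.equiv 2 (Fin N → ℝ)) 0 := by rw [h2]
      _ = 0 := rfl
  have hxne : x ≠ 0 := by
    intro h0
    apply hVne
    have h1 : (1 - R) V = 0 := by rw [hkey, h0]; simp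
    have h2 := hrec V
    rw [h1] at h2
    simpa using h2.symm
  have hVeq : V = (μ⁻¹ * (c * x)) •
      (((u⁻¹ : _ˣ) : EuclideanSpace ℝ (Fin N) →L[ℝ] EuclideanSpace ℝ (Fin N)) E) := by
    have h2 := hrec V
    rw [hkey] at h2
    rw [← h2, ContinuousLinearMap.map_smul]
  have happly : ((∑' n : ℕ, R ^ n) : EuclideanSpace ℝ (Fin N) →L[ℝ] EuclideanSpace ℝ (Fin N)) E
      = ∑' n : ℕ, (R ^ n) E :=
    ContinuousLinearMap.map_tsum (ContinuousLinearMap.apply ℝ (EuclideanSpace ℝ (Fin N)) E) hsumR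
  have hsumRE : Summable (fun n : ℕ => (R ^ n) E) :=
    hsumR.map (ContinuousLinearMap.apply ℝ (EuclideanSpace ℝ (Fin N)) E)
      (ContinuousLinearMap.apply ℝ (EuclideanSpace ℝ (Fin N)) E).continuous
  have hRE : ∀ n : ℕ, (R ^ n) E = (μ⁻¹) ^ n • ((T ^ n) E) := by
    intro n
    induction n with
    | zero => simp
    | succ n ih =>
      calc (R ^ (n + 1)) E = R ((R ^ n) E) := by
            rw [pow_succ', ContinuousLinearMap.mul_apply]
        _ = R ((μ⁻¹) ^ n • (T ^ n) E) := by rw [ih]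
        _ = (μ⁻¹) ^ n • R ((T ^ n) E) := R.map_smul _ _
        _ = (μ⁻¹) ^ n • (μ⁻¹ • T ((T ^ n) E)) := by rw [hR]; rfl
        _ = (μ⁻¹) ^ (n + 1) • (T ^ (n + 1)) E := by
            rw [smul_smul, ← pow_succ, ← ContinuousLinearMap.mul_apply, ← pow_succ']
  have hterm : ∀ n : ℕ,
      (inner ℝ E ((R ^ n) E) : ℝ) = dotProduct e ((H ^ n) *ᵥ e) / μ ^ n := by
    intro n
    rw [hRE, real_inner_smul_right, hTk, hE, inner_symm_dot, inv_pow, ← div_eq_inv_mul]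
  have hxinner : x = inner ℝ E V := by
    rw [hE, hV, inner_symm_dot]
  have hS : (inner ℝ E V : ℝ) =
      (μ⁻¹ * (c * x)) * ∑' n : ℕ, dotProduct e ((H ^ n) *ᵥ e) / μ ^ n := by
    rw [hVeq, real_inner_smul_right, huinv, happly]
    congr 1
    calc (inner ℝ E (∑' n : ℕ, (R ^ n) E) : ℝ)
        = innerSL ℝ E (∑' n : ℕ, (R ^ n) E) := rfl
      _ = ∑' n : ℕ, innerSL ℝ E ((R ^ n) E) := ContinuousLinearMap.map_tsum _ hsumRE
      _ = ∑' n : ℕ, dotProduct e ((H ^ n) *ᵥ e) / μ ^ n := tsum_congr fun n => hterm n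
  have hfinal : x = (μ⁻¹ * (c * x)) *
      ∑' n : ℕ, dotProduct e ((H ^ n) *ᵥ e) / μ ^ n := hxinner.trans hS
  have hmul : μ * x =
      (c * ∑' n : ℕ, dotProduct e ((H ^ n) *ᵥ e) / μ ^ n) * x := by
    calc μ * x = μ * ((μ⁻¹ * (c * x)) *
          ∑' n : ℕ, dotProduct e ((H ^ n) *ᵥ e) / μ ^ n) := by rw [← hfinal]
      _ = (μ * μ⁻¹) * ((c * x) * ∑' n : ℕ, dotProduct e ((H ^ n) *ᵥ e) / μ ^ n) := by
          ring
      _ = (c * ∑' n : ℕ, dotProduct e ((H ^ n) *ᵥ e) / μ ^ n) * x := by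
          rw [mul_inv_cancel₀ hμ0.ne']; ring
  exact mul_right_cancel₀ hxne hmul
end

section
/- Let N ≥ 1 and let H be a random real symmetric N×N matrix such that the entries {H_{i,j} : 1 ≤ i ≤ j ≤ N} are mutually independent, E[H_{i,j}] = 0, E[H_{i,j}²] = 1/N, and E[|H_{i,j}|³] ≤ (C₂/√N)³ for all i ≤ j and some constant C₂ > 0 (with H_{j,i} = H_{i,j}). Let e be the unit vector in ℝ^N all of whose entries equal 1/√N. Then: (i) E[⟨e, H e⟩²] ≤ 3/N; (ii) |E[⟨e, H³ e⟩]| ≤ 8C₂³/√N; (iii) |E[⟨e, H e⟩·⟨e, H² e⟩]| ≤ 8C₂³/(N√N); (iv) |E[⟨e, H e⟩³]| ≤ 8C₂³/(N²√N). -/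
open MeasureTheory ProbabilityTheory Matrix Finset

private lemma aux_add_integrable {Ω : Type} [MeasurableSpace Ω] {P : Measure Ω}
    [IsProbabilityMeasure P] {U V : Ω → ℝ} (hU : Measurable U) (hV : Measurable V)
    (hUV : IndepFun U V P) (hint : Integrable (fun ω => U ω + V ω) P) :
    Integrable U P := by
  have hmap : P.map (fun ω => (U ω, V ω)) = (P.map U).prod (P.map V) :=
    (indepFun_iff_map_prod_eq_prod_map_map hU.aemeasurable hV.aemeasurable).1 hUV
  have h1 : Integrable (fun p : ℝ × ℝ => p.1 + p.2) (P.map (fun ω => (U ω, V ω))) := by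
    rw [integrable_map_measure (by fun_prop) ((hU.prodMk hV).aemeasurable)]
    exact hint
  rw [hmap] at h1
  haveI : IsProbabilityMeasure (P.map V) := Measure.isProbabilityMeasure_map hV.aemeasurable
  obtain ⟨y, hy⟩ := h1.prod_left_ae.exists
  have h3 : Integrable (fun x : ℝ => x) (P.map U) := by
    have h4 := hy.sub (integrable_const y)
    have h6 : ((fun x : ℝ => x + y) - fun _ => y) = fun x : ℝ => x := by
      funext x; simp
    rwa [h6] at h4
  have h5 := (integrable_map_measure aestronglyMeasurable_id hU.aemeasurable).1 h3
  exact h5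

private lemma aux_pair {Ω : Type} [MeasurableSpace Ω] {P : Measure Ω}
    [IsProbabilityMeasure P] {Q : Type} [Fintype Q] [DecidableEq Q] {X : Q → Ω → ℝ}
    (hindep : iIndepFun X P)
    (hX0 : ∀ q, (∫ ω, X q ω ∂P) = 0)
    (hXint : ∀ q, Integrable (X q) P)
    (hXmul : ∀ q q', Integrable (fun ω => X q ω * X q' ω) P)
    {v : ℝ} (hv : 0 ≤ v) (hvar : ∀ q, (∫ ω, X q ω ^ 2 ∂P) = v)
    {ι : Type} [Fintype ι] [DecidableEq ι] (f g : ι → Q) {c : ℝ} (hc : 0 ≤ c) :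
    (∫ ω, ∑ t, c * (X (f t) ω * X (g t) ω) ∂P)
      ≤ c * (univ.filter fun t => f t = g t).card * v := by
  have hint_t : ∀ t : ι, Integrable (fun ω => c * (X (f t) ω * X (g t) ω)) P :=
    fun t => (hXmul (f t) (g t)).const_mul c
  rw [integral_finset_sum univ (fun t _ => hint_t t)]
  have hterm : ∀ t : ι, (∫ ω, c * (X (f t) ω * X (g t) ω) ∂P)
      = if f t = g t then c * v else 0 := by
    intro t
    rw [integral_const_mul]
    by_cases hm : f t = g t
    · rw [if_pos hm, ← hm]
      have : (∫ ω, X (f t) ω * X (f t) ω ∂P) = v := by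
        rw [← hvar (f t)]; congr 1; funext ω; ring
      rw [this]
    · rw [if_neg hm]
      have hI : IndepFun (X (f t)) (X (g t)) P := hindep.indepFun hm
      have := hI.integral_fun_mul_eq_mul_integral (hXint (f t)).aestronglyMeasurable
        (hXint (g t)).aestronglyMeasurable
      have h2 : (∫ ω, X (f t) ω * X (g t) ω ∂P) = 0 := by
        simpa [hX0 (f t)] using this
      rw [h2, mul_zero]
  calc (∑ t, ∫ ω, c * (X (f t) ω * X (g t) ω) ∂P)
      = ∑ t, if f t = g t then c * v else 0 := by
        exact Finset.sum_congr rfl fun t _ => hterm t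
    _ = (univ.filter fun t => f t = g t).card * (c * v) := by
        rw [Finset.sum_ite, Finset.sum_const_zero, Finset.sum_const, add_zero,
          nsmul_eq_mul]
    _ = c * (univ.filter fun t => f t = g t).card * v := by ring
    _ ≤ c * (univ.filter fun t => f t = g t).card * v := le_rfl

private lemma aux_triple {Ω : Type} [MeasurableSpace Ω] {P : Measure Ω}
    [IsProbabilityMeasure P] {Q : Type} [Fintype Q] [DecidableEq Q] {X : Q → Ω → ℝ}
    (hmeas : ∀ q, Measurable (X q))
    (hindep : iIndepFun X P)
    (hX0 : ∀ q, (∫ ω, X q ω ∂P) = 0)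
    (hXint : ∀ q, Integrable (X q) P)
    (hXmul : ∀ q q', Integrable (fun ω => X q ω * X q' ω) P)
    {B : ℝ} (hB : 0 ≤ B)
    (hX3 : ∀ q, Integrable (fun ω => X q ω ^ 3) P → |∫ ω, X q ω ^ 3 ∂P| ≤ B)
    {ι : Type} [Fintype ι] [DecidableEq ι] (f g h : ι → Q) {c : ℝ} (hc : 0 < c)
    (hcov : ∀ q, ∃ t, f t = q ∧ g t = q ∧ h t = q) :
    |∫ ω, ∑ t, c * (X (f t) ω * (X (g t) ω * X (h t) ω)) ∂P|
      ≤ c * (univ.filter fun t => f t = g t ∧ f t = h t).card * B := by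
  -- terms in which some index appears exactly once integrate to zero
  have hsingle : ∀ a b d : Q, a ≠ b → a ≠ d →
      Integrable (fun ω => X a ω * (X b ω * X d ω)) P ∧
        (∫ ω, X a ω * (X b ω * X d ω) ∂P) = 0 := by
    intro a b d hab had
    have hI : IndepFun (X a) (X b * X d) P :=
      hindep.indepFun_mul_right hmeas a b d hab had
    have h2 : Integrable (X b * X d) P := hXmul b d
    refine ⟨hI.integrable_mul (hXint a) h2, ?_⟩
    have h3 := hI.integral_fun_mul_eq_mul_integral (hXint a).aestronglyMeasurable
      h2.aestronglyMeasurable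
    simpa [hX0 a] using h3
  have hterm0 : ∀ a b d : Q, ¬(a = b ∧ a = d) →
      Integrable (fun ω => X a ω * (X b ω * X d ω)) P ∧
        (∫ ω, X a ω * (X b ω * X d ω) ∂P) = 0 := by
    intro a b d hne
    by_cases h1 : a = b
    · subst h1
      have h2 : a ≠ d := fun hh => hne ⟨rfl, hh⟩
      have h3 := hsingle d a a (Ne.symm h2) (Ne.symm h2)
      have heq : (fun ω => X a ω * (X a ω * X d ω))
          = fun ω => X d ω * (X a ω * X a ω) := by funext ω; ring
      rw [heq]; exact h3
    · by_cases h2 : a = d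
      · subst h2
        have h3 := hsingle b a a (Ne.symm h1) (Ne.symm h1)
        have heq : (fun ω => X a ω * (X b ω * X a ω))
            = fun ω => X b ω * (X a ω * X a ω) := by funext ω; ring
        rw [heq]; exact h3
      · exact hsingle a b d h1 h2
  set M : Finset ι := univ.filter (fun t => f t = g t ∧ f t = h t) with hM
  have hMmem : ∀ t : ι, t ∈ M ↔ (f t = g t ∧ f t = h t) := by
    intro t; simp [hM]
  by_cases hall : ∀ q, Integrable (fun ω => X q ω ^ 3) P
  · -- every entry has an integrable cube: expand and estimate term by term
    have hcube : ∀ t : ι, t ∈ M →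
        (fun ω => c * (X (f t) ω * (X (g t) ω * X (h t) ω)))
        = fun ω => c * X (f t) ω ^ 3 := by
      intro t ht
      obtain ⟨h1, h2⟩ := (hMmem t).1 ht
      funext ω; rw [← h1, ← h2]; ring
    have hint_t : ∀ t : ι,
        Integrable (fun ω => c * (X (f t) ω * (X (g t) ω * X (h t) ω))) P := by
      intro t
      by_cases hm : t ∈ M
      · rw [hcube t hm]; exact (hall (f t)).const_mul c
      · exact ((hterm0 _ _ _ (fun hh => hm ((hMmem t).2 hh))).1.const_mul c)
    rw [integral_finset_sum univ (fun t _ => hint_t t)]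
    calc |∑ t, ∫ ω, c * (X (f t) ω * (X (g t) ω * X (h t) ω)) ∂P|
        ≤ ∑ t, |∫ ω, c * (X (f t) ω * (X (g t) ω * X (h t) ω)) ∂P| :=
          Finset.abs_sum_le_sum_abs _ _
      _ ≤ ∑ t, (if t ∈ M then c * B else 0) := by
          refine Finset.sum_le_sum fun t _ => ?_
          by_cases hm : t ∈ M
          · rw [if_pos hm]
            rw [hcube t hm, integral_const_mul, abs_mul, abs_of_pos hc]
            exact mul_le_mul_of_nonneg_left (hX3 (f t) (hall (f t))) hc.le
          · rw [if_neg hm, integral_const_mul,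
              (hterm0 _ _ _ (fun hh => hm ((hMmem t).2 hh))).2, mul_zero, abs_zero]
      _ = M.card * (c * B) := by
          rw [Finset.sum_ite_mem, Finset.univ_inter, Finset.sum_const, nsmul_eq_mul]
      _ = c * M.card * B := by ring
  · -- some entry has a non-integrable cube: the integrand is not integrable
    push_neg at hall
    obtain ⟨q0, hq0⟩ := hall
    have hnotint : ¬ Integrable
        (fun ω => ∑ t, c * (X (f t) ω * (X (g t) ω * X (h t) ω))) P := by
      intro hF
      have hGint : Integrable
          (fun ω => ∑ t ∈ Mᶜ, c * (X (f t) ω * (X (g t) ω * X (h t) ω))) P := by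
        refine integrable_finset_sum _ fun t ht => ?_
        have ht' : ¬(f t = g t ∧ f t = h t) := by
          intro hh; rw [Finset.mem_compl] at ht; exact ht ((hMmem t).2 hh)
        exact (hterm0 _ _ _ ht').1.const_mul c
      have hKint : Integrable
          (fun ω => ∑ t ∈ M, c * (X (f t) ω * (X (g t) ω * X (h t) ω))) P := by
        have heq : (fun ω => ∑ t ∈ M, c * (X (f t) ω * (X (g t) ω * X (h t) ω)))
            = fun ω => (∑ t, c * (X (f t) ω * (X (g t) ω * X (h t) ω)))
              - ∑ t ∈ Mᶜ, c * (X (f t) ω * (X (g t) ω * X (h t) ω)) := by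
          funext ω
          rw [eq_sub_iff_add_eq, Finset.sum_add_sum_compl]
        rw [heq]; exact hF.sub hGint
      set Y : Q → Ω → ℝ :=
        fun q ω => ((M.filter (fun t => f t = q)).card : ℝ) * c * X q ω ^ 3 with hY
      have hKeq : (fun ω => ∑ t ∈ M, c * (X (f t) ω * (X (g t) ω * X (h t) ω)))
          = fun ω => ∑ q : Q, Y q ω := by
        funext ω
        rw [← Finset.sum_fiberwise_of_maps_to (fun t _ => Finset.mem_univ (f t))
          (fun t => c * (X (f t) ω * (X (g t) ω * X (h t) ω)))]
        refine Finset.sum_congr rfl fun q _ => ?_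
        have hin : ∀ t ∈ M.filter (fun t => f t = q),
            c * (X (f t) ω * (X (g t) ω * X (h t) ω)) = c * X q ω ^ 3 := by
          intro t ht
          rw [Finset.mem_filter] at ht
          obtain ⟨htM, htq⟩ := ht
          obtain ⟨h1, h2⟩ := (hMmem t).1 htM
          rw [← htq, ← h1, ← h2]; ring
        rw [Finset.sum_congr rfl hin, Finset.sum_const, nsmul_eq_mul, hY]
        ring
      rw [hKeq] at hKint
      have hYmeas : ∀ q, Measurable (Y q) := by
        intro q
        exact (((hmeas q).pow_const 3).const_mul _)
      have hYindep : iIndepFun Y P := by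
        have h5 := hindep.comp
          (fun q x => ((M.filter (fun t => f t = q)).card : ℝ) * c * x ^ 3)
          (fun q => (measurable_id.pow_const 3).const_mul _)
        exact h5
      have hind2 : IndepFun (Y q0) (fun ω => ∑ q ∈ univ.erase q0, Y q ω) P := by
        have h6 := hYindep.indepFun_finset_sum_of_notMem hYmeas
          (Finset.notMem_erase q0 univ)
        have h7 : (∑ q ∈ univ.erase q0, Y q) = fun ω => ∑ q ∈ univ.erase q0, Y q ω := by
          funext ω; simp [Finset.sum_apply]
        rw [h7] at h6
        exact h6.symm
      have hsumint : Integrable (fun ω => Y q0 ω + ∑ q ∈ univ.erase q0, Y q ω) P := by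
        have heq : (fun ω => Y q0 ω + ∑ q ∈ univ.erase q0, Y q ω)
            = fun ω => ∑ q : Q, Y q ω := by
          funext ω
          exact Finset.add_sum_erase _ (fun q => Y q ω) (Finset.mem_univ q0)
        rw [heq]; exact hKint
      have hYq0int : Integrable (Y q0) P :=
        aux_add_integrable (hYmeas q0)
          (by exact Finset.measurable_sum _ (fun q _ => hYmeas q)) hind2 hsumint
      -- extract integrability of the cube of `X q0`
      obtain ⟨t0, ht1, ht2, ht3⟩ := hcov q0
      have ht0 : t0 ∈ M.filter (fun t => f t = q0) := by
        rw [Finset.mem_filter, hMmem]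
        exact ⟨⟨by rw [ht1, ht2], by rw [ht1, ht3]⟩, ht1⟩
      have hcardpos : (0:ℝ) < ((M.filter (fun t => f t = q0)).card : ℝ) * c := by
        have : 0 < (M.filter (fun t => f t = q0)).card := Finset.card_pos.2 ⟨t0, ht0⟩
        positivity
      have h8 : Integrable (fun ω => X q0 ω ^ 3) P := by
        have h9 := hYq0int.const_mul (((M.filter (fun t => f t = q0)).card : ℝ) * c)⁻¹
        have heq : (fun ω => (((M.filter (fun t => f t = q0)).card : ℝ) * c)⁻¹ * Y q0 ω)
            = fun ω => X q0 ω ^ 3 := by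
          funext ω
          rw [hY]
          rw [← mul_assoc, inv_mul_cancel₀ hcardpos.ne', one_mul]
        rwa [heq] at h9
      exact hq0 h8
    rw [integral_undef hnotint, abs_zero]
    positivity
set_option maxHeartbeats 1000000 in
/-- **Moment bounds for the quadratic forms of a Wigner-type matrix.**
Let `H` be a random real symmetric `N × N` matrix whose entries `{H i j : i ≤ j}`
are mutually independent with `E[H i j] = 0`, `E[(H i j)²] = 1/N` and
`E[|H i j|³] ≤ (C₂/√N)³` (extended by symmetry), and let `e` be the unit vector all
of whose entries equal `1/√N`. Then:
(i) `E[⟨e, H e⟩²] ≤ 3/N`; (ii) `|E[⟨e, H³ e⟩]| ≤ 8C₂³/√N`;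
(iii) `|E[⟨e, H e⟩ ⟨e, H² e⟩]| ≤ 8C₂³/(N√N)`; (iv) `|E[⟨e, H e⟩³]| ≤ 8C₂³/(N²√N)`. -/
theorem stmt_19 (N : ℕ) (hN : 1 ≤ N) (C₂ : ℝ) (hC₂ : 0 < C₂)
    (Ω : Type) [MeasurableSpace Ω] (P : Measure Ω) [IsProbabilityMeasure P]
    (H : Ω → Matrix (Fin N) (Fin N) ℝ)
    (hmeas : ∀ i j, Measurable (fun ω => H ω i j))
    (hsymm : ∀ ω, (H ω).IsSymm)
    (hindep : iIndepFun
      (fun (q : {ij : Fin N × Fin N // ij.1 ≤ ij.2}) ω => H ω q.1.1 q.1.2) P)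
    (hmean : ∀ i j : Fin N, i ≤ j → (∫ ω, H ω i j ∂P) = 0)
    (hvar : ∀ i j : Fin N, i ≤ j → (∫ ω, (H ω i j) ^ 2 ∂P) = 1 / N)
    (hthird : ∀ i j : Fin N, i ≤ j →
      (∫ ω, |H ω i j| ^ 3 ∂P) ≤ (C₂ / Real.sqrt N) ^ 3)
    (e : Fin N → ℝ) (he : e = fun _ => 1 / Real.sqrt N) :
    (∫ ω, (dotProduct e (H ω *ᵥ e)) ^ 2 ∂P) ≤ 3 / N ∧
    |∫ ω, dotProduct e ((H ω ^ 3) *ᵥ e) ∂P| ≤ 8 * C₂ ^ 3 / Real.sqrt N ∧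
    |∫ ω, dotProduct e (H ω *ᵥ e)
        * dotProduct e ((H ω ^ 2) *ᵥ e) ∂P|
      ≤ 8 * C₂ ^ 3 / ((N : ℝ) * Real.sqrt N) ∧
    |∫ ω, (dotProduct e (H ω *ᵥ e)) ^ 3 ∂P|
      ≤ 8 * C₂ ^ 3 / ((N : ℝ) ^ 2 * Real.sqrt N) := by
  classical
  subst he
  have hN0 : (0:ℝ) < (N:ℝ) := by exact_mod_cast hN
  set sN : ℝ := Real.sqrt N with hsNdef
  have hsN0 : 0 < sN := Real.sqrt_pos.2 hN0
  have hsN2 : sN ^ 2 = (N:ℝ) := Real.sq_sqrt hN0.le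
  have hsN3 : sN ^ 3 = (N:ℝ) * sN := by rw [pow_succ, hsN2]
  set c0 : ℝ := 1 / sN with hc0def
  have hc00 : 0 < c0 := by positivity
  have hc0sq : c0 ^ 2 = 1 / (N:ℝ) := by rw [hc0def, div_pow, one_pow, hsN2]
  set Q := {ij : Fin N × Fin N // ij.1 ≤ ij.2} with hQ
  set X : Q → Ω → ℝ := fun q ω => H ω q.1.1 q.1.2 with hX
  -- basic facts about the independent entries
  have hXmeas : ∀ q : Q, Measurable (X q) := fun q => hmeas q.1.1 q.1.2
  have hX0 : ∀ q : Q, (∫ ω, X q ω ∂P) = 0 := fun q => hmean q.1.1 q.1.2 q.2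
  have hX2 : ∀ q : Q, (∫ ω, X q ω ^ 2 ∂P) = 1 / (N:ℝ) := fun q => hvar q.1.1 q.1.2 q.2
  have hsqint : ∀ q : Q, Integrable (fun ω => X q ω ^ 2) P := by
    intro q
    by_contra hni
    have h1 := integral_undef hni
    rw [hX2 q] at h1
    exact absurd h1 (by positivity)
  have hL2 : ∀ q : Q, MemLp (X q) 2 P :=
    fun q => (memLp_two_iff_integrable_sq (hXmeas q).aestronglyMeasurable).2 (hsqint q)
  have hXint : ∀ q : Q, Integrable (X q) P := fun q => (hL2 q).integrable one_le_two
  have hXmul : ∀ q q' : Q, Integrable (fun ω => X q ω * X q' ω) P := by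
    intro q q'
    have hg : Integrable (fun ω => X q ω ^ 2 + X q' ω ^ 2) P := (hsqint q).add (hsqint q')
    refine hg.mono' (((hXmeas q).mul (hXmeas q')).aestronglyMeasurable) ?_
    filter_upwards with ω
    rw [Real.norm_eq_abs, abs_mul]
    nlinarith [sq_nonneg (|X q ω| - |X q' ω|), sq_abs (X q ω), sq_abs (X q' ω),
      abs_nonneg (X q ω), abs_nonneg (X q' ω)]
  have hB0 : (0:ℝ) ≤ (C₂ / sN) ^ 3 := by positivity
  have hX3bound : ∀ q : Q, Integrable (fun ω => X q ω ^ 3) P →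
      |∫ ω, X q ω ^ 3 ∂P| ≤ (C₂ / sN) ^ 3 := by
    intro q hi
    have h1 := norm_integral_le_integral_norm (μ := P) (fun ω => X q ω ^ 3)
    rw [Real.norm_eq_abs] at h1
    have h2 : (∫ a, ‖X q a ^ 3‖ ∂P) = ∫ a, |X q a| ^ 3 ∂P := by
      congr 1; funext a; rw [Real.norm_eq_abs, abs_pow]
    rw [h2] at h1
    exact h1.trans (hthird q.1.1 q.1.2 q.2)
  -- the canonical representative of an index pair
  set κ : Fin N × Fin N → Q :=
    fun p => if h : p.1 ≤ p.2 then ⟨p, h⟩ else ⟨(p.2, p.1), le_of_not_ge h⟩ with hκ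
  have hHX : ∀ (ω : Ω) (i j : Fin N), H ω i j = X (κ (i, j)) ω := by
    intro ω i j
    by_cases h : i ≤ j
    · simp only [hκ]
      rw [dif_pos (show (i, j).1 ≤ (i, j).2 from h)]
    · simp only [hκ]
      rw [dif_neg (show ¬(i, j).1 ≤ (i, j).2 from h)]
      exact ((hsymm ω).apply i j).symm
  have hκq : ∀ q : Q, κ (q.1.1, q.1.2) = q ∧ κ (q.1.2, q.1.1) = q := by
    intro q
    constructor
    · simp only [hκ]
      rw [dif_pos (show (q.1.1, q.1.2).1 ≤ (q.1.1, q.1.2).2 from q.2)]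
    · by_cases h : q.1.2 ≤ q.1.1
      · have h2 : q.1.1 = q.1.2 := le_antisymm q.2 h
        simp only [hκ]
        rw [dif_pos (show (q.1.2, q.1.1).1 ≤ (q.1.2, q.1.1).2 from h)]
        exact Subtype.ext (by rw [Prod.ext_iff]; exact ⟨h2.symm, h2⟩)
      · simp only [hκ]
        rw [dif_neg (show ¬(q.1.2, q.1.1).1 ≤ (q.1.2, q.1.1).2 from h)]
  have hκswap : ∀ p p' : Fin N × Fin N, κ p' = κ p → p' = p ∨ p' = (p.2, p.1) := by
    intro p p' hpq
    simp only [hκ] at hpq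
    by_cases h1 : p.1 ≤ p.2 <;> by_cases h2 : p'.1 ≤ p'.2
    · rw [dif_pos h1, dif_pos h2, Subtype.mk.injEq] at hpq
      exact Or.inl hpq
    · rw [dif_pos h1, dif_neg h2, Subtype.mk.injEq] at hpq
      right
      rw [← hpq]
    · rw [dif_neg h1, dif_pos h2, Subtype.mk.injEq] at hpq
      exact Or.inr hpq
    · rw [dif_neg h1, dif_neg h2, Subtype.mk.injEq] at hpq
      rw [Prod.ext_iff] at hpq
      exact Or.inl (Prod.ext hpq.2 hpq.1)
  have hpin : ∀ A A' p p' : Fin N × Fin N, κ p = κ A → κ p' = κ A' → A = A' →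
      decide (p = A) = decide (p' = A') → p = p' := by
    intro A A' p p' h1 h2 hAA h3
    subst hAA
    by_cases hA : p = A
    · have h4 : p' = A := of_decide_eq_true (by rw [← h3]; exact decide_eq_true hA)
      rw [hA, h4]
    · have h4 : p' ≠ A := fun hh => hA (of_decide_eq_true (by rw [h3]; exact decide_eq_true hh))
      rcases hκswap A p h1 with h5 | h5
      · exact absurd h5 hA
      rcases hκswap A p' h2 with h6 | h6
      · exact absurd h6 h4
      rw [h5, h6]
  -- expansion of the quadratic form
  have hdotP : ∀ (M : Matrix (Fin N) (Fin N) ℝ),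
      dotProduct (fun _ => c0) (M *ᵥ (fun _ => c0))
        = ∑ p : Fin N × Fin N, c0 ^ 2 * M p.1 p.2 := by
    intro M
    rw [Fintype.sum_prod_type]
    simp only [dotProduct, Matrix.mulVec, Finset.mul_sum]
    exact Finset.sum_congr rfl fun i _ => Finset.sum_congr rfl fun j _ => by ring
  haveI : Fintype Q := by unfold Q; infer_instance
  haveI : DecidableEq Q := by unfold Q; infer_instance
  refine ⟨?_, ?_, ?_, ?_⟩
  · -- (i)
    have hsq : ∀ ω : Ω, (dotProduct (fun _ => c0) (H ω *ᵥ (fun _ => c0))) ^ 2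
        = ∑ t : (Fin N × Fin N) × (Fin N × Fin N),
            c0 ^ 4 * (X (κ t.1) ω * X (κ t.2) ω) := by
      intro ω
      rw [hdotP (H ω), sq]
      simp only [Fintype.sum_prod_type, Finset.sum_mul, Finset.mul_sum]
      refine Finset.sum_congr rfl fun i _ => Finset.sum_congr rfl fun j _ =>
        Finset.sum_congr rfl fun k _ => Finset.sum_congr rfl fun l _ => ?_
      rw [hHX ω i j, hHX ω k l]; ring
    have hb := aux_pair (ι := (Fin N × Fin N) × (Fin N × Fin N)) hindep hX0 hXint hXmul
      (v := 1/(N:ℝ)) (by positivity) hX2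
      (fun t => κ t.1) (fun t => κ t.2) (c := c0 ^ 4) (by positivity)
    simp only [hsq]
    refine le_trans hb ?_
    have hcard : ((Finset.univ.filter fun t : (Fin N × Fin N) × (Fin N × Fin N) =>
        κ t.1 = κ t.2).card : ℝ) ≤ 2 * (N:ℝ) ^ 2 := by
      have h1 : (Finset.univ.filter fun t : (Fin N × Fin N) × (Fin N × Fin N) =>
          κ t.1 = κ t.2).card ≤ (Finset.univ : Finset ((Fin N × Fin N) × Bool)).card := by
        refine Finset.card_le_card_of_injOn (fun t => (t.1, decide (t.2 = t.1)))
          (fun t _ => Finset.mem_univ _) ?_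
        intro t ht t' ht' heq
        simp only [Finset.coe_filter, Set.mem_setOf_eq, Finset.mem_univ, true_and] at ht ht'
        rw [Prod.mk.injEq, Prod.mk.injEq] at heq
        obtain ⟨⟨hA1, hA2⟩, hd⟩ := heq
        have hA : t.1 = t'.1 := Prod.ext hA1 hA2
        have h2 : t.2 = t'.2 := hpin t.1 t'.1 t.2 t'.2 ht.symm ht'.symm hA hd
        exact Prod.ext hA h2
      have h2 : (Finset.univ : Finset ((Fin N × Fin N) × Bool)).card = N * N * 2 := by
        simp [Finset.card_univ]
      have h3 := h1.trans_eq h2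
      calc ((Finset.univ.filter fun t : (Fin N × Fin N) × (Fin N × Fin N) =>
            κ t.1 = κ t.2).card : ℝ) ≤ ((N * N * 2 : ℕ) : ℝ) := by exact_mod_cast h3
        _ = 2 * (N:ℝ) ^ 2 := by push_cast; ring
    calc c0 ^ 4 * ((Finset.univ.filter fun t : (Fin N × Fin N) × (Fin N × Fin N) =>
          κ t.1 = κ t.2).card : ℝ) * (1/(N:ℝ))
        ≤ c0 ^ 4 * (2 * (N:ℝ) ^ 2) * (1/(N:ℝ)) := by
          have h4 : (0:ℝ) ≤ c0 ^ 4 := by positivity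
          have h5 : (0:ℝ) ≤ 1/(N:ℝ) := by positivity
          exact mul_le_mul_of_nonneg_right (mul_le_mul_of_nonneg_left hcard h4) h5
      _ = 2 / (N:ℝ) := by
          rw [show c0 ^ 4 = (c0 ^ 2) ^ 2 by ring, hc0sq]
          field_simp
      _ ≤ 3 / (N:ℝ) := by gcongr <;> norm_num
  · -- (ii)
    have hexp : ∀ ω : Ω, dotProduct (fun _ => c0) ((H ω ^ 3) *ᵥ (fun _ => c0))
        = ∑ t : Fin N × Fin N × Fin N × Fin N,
            c0 ^ 2 * (X (κ (t.1, t.2.2.2)) ω *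
              (X (κ (t.2.2.2, t.2.2.1)) ω * X (κ (t.2.2.1, t.2.1)) ω)) := by
      intro ω
      rw [hdotP (H ω ^ 3)]
      simp only [Fintype.sum_prod_type]
      refine Finset.sum_congr rfl fun a _ => Finset.sum_congr rfl fun b _ => ?_
      rw [show H ω ^ 3 = H ω * H ω * H ω by rw [pow_succ, pow_two]]
      rw [Matrix.mul_apply, Finset.mul_sum]
      refine Finset.sum_congr rfl fun k _ => ?_
      rw [Matrix.mul_apply, Finset.sum_mul, Finset.mul_sum]
      refine Finset.sum_congr rfl fun l _ => ?_
      rw [hHX ω a l, hHX ω l k, hHX ω k b]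
      ring
    have hcov : ∀ q : Q, ∃ t : Fin N × Fin N × Fin N × Fin N,
        κ (t.1, t.2.2.2) = q ∧ κ (t.2.2.2, t.2.2.1) = q ∧ κ (t.2.2.1, t.2.1) = q :=
      fun q => ⟨(q.1.1, q.1.2, q.1.1, q.1.2), (hκq q).1, (hκq q).2, (hκq q).1⟩
    have hb := aux_triple (ι := Fin N × Fin N × Fin N × Fin N) hXmeas hindep hX0 hXint hXmul
      hB0 hX3bound (fun t => κ (t.1, t.2.2.2)) (fun t => κ (t.2.2.2, t.2.2.1))
      (fun t => κ (t.2.2.1, t.2.1)) (c := c0 ^ 2) (by positivity) hcov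
    simp only [hexp]
    refine le_trans hb ?_
    have hcard : ((Finset.univ.filter fun t : Fin N × Fin N × Fin N × Fin N =>
        κ (t.1, t.2.2.2) = κ (t.2.2.2, t.2.2.1) ∧
          κ (t.1, t.2.2.2) = κ (t.2.2.1, t.2.1)).card : ℝ) ≤ 4 * (N:ℝ) ^ 2 := by
      have h1 : (Finset.univ.filter fun t : Fin N × Fin N × Fin N × Fin N =>
          κ (t.1, t.2.2.2) = κ (t.2.2.2, t.2.2.1) ∧
            κ (t.1, t.2.2.2) = κ (t.2.2.1, t.2.1)).card
          ≤ (Finset.univ : Finset ((Fin N × Fin N) × Bool × Bool)).card := by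
        refine Finset.card_le_card_of_injOn
          (fun t => ((t.1, t.2.2.2), decide ((t.2.2.2, t.2.2.1) = (t.1, t.2.2.2)),
            decide ((t.2.2.1, t.2.1) = (t.1, t.2.2.2)))) (fun t _ => Finset.mem_univ _) ?_
        intro t ht t' ht' heq
        simp only [Finset.coe_filter, Set.mem_setOf_eq, Finset.mem_univ, true_and] at ht ht'
        obtain ⟨hI1, hI2⟩ := ht
        obtain ⟨hI1', hI2'⟩ := ht'
        rw [Prod.mk.injEq, Prod.mk.injEq, Prod.mk.injEq] at heq
        obtain ⟨⟨hA1, hA2⟩, hd2, hd3⟩ := heq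
        have hA : ((t.1 : Fin N), t.2.2.2) = (t'.1, t'.2.2.2) := by rw [hA1, hA2]
        have hP2 : (t.2.2.2, t.2.2.1) = (t'.2.2.2, t'.2.2.1) :=
          hpin (t.1, t.2.2.2) (t'.1, t'.2.2.2) _ _ hI1.symm hI1'.symm hA hd2
        have hP3 : (t.2.2.1, t.2.1) = (t'.2.2.1, t'.2.1) :=
          hpin (t.1, t.2.2.2) (t'.1, t'.2.2.2) _ _ hI2.symm hI2'.symm hA hd3
        exact Prod.ext hA1
          (Prod.ext (Prod.ext_iff.1 hP3).2
            (Prod.ext (Prod.ext_iff.1 hP2).2 hA2))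
      have h2 : (Finset.univ : Finset ((Fin N × Fin N) × Bool × Bool)).card
          = N * N * (2 * 2) := by simp [Finset.card_univ]
      have h3 := h1.trans_eq h2
      calc ((Finset.univ.filter fun t : Fin N × Fin N × Fin N × Fin N =>
            κ (t.1, t.2.2.2) = κ (t.2.2.2, t.2.2.1) ∧
              κ (t.1, t.2.2.2) = κ (t.2.2.1, t.2.1)).card : ℝ)
          ≤ ((N * N * (2 * 2) : ℕ) : ℝ) := by exact_mod_cast h3
        _ = 4 * (N:ℝ) ^ 2 := by push_cast; ring
    have hNne : (N:ℝ) ≠ 0 := hN0.ne'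
    have hsNne : sN ≠ 0 := hsN0.ne'
    calc c0 ^ 2 * ((Finset.univ.filter fun t : Fin N × Fin N × Fin N × Fin N =>
          κ (t.1, t.2.2.2) = κ (t.2.2.2, t.2.2.1) ∧
            κ (t.1, t.2.2.2) = κ (t.2.2.1, t.2.1)).card : ℝ) * (C₂ / sN) ^ 3
        ≤ c0 ^ 2 * (4 * (N:ℝ) ^ 2) * (C₂ / sN) ^ 3 :=
          mul_le_mul_of_nonneg_right
            (mul_le_mul_of_nonneg_left hcard (by positivity)) hB0
      _ = 4 * C₂ ^ 3 / sN := by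
          rw [hc0def, ← hsN2]
          field_simp
      _ ≤ 8 * C₂ ^ 3 / sN := by gcongr <;> norm_num
  · -- (iii)
    have hexp : ∀ ω : Ω, dotProduct (fun _ => c0) (H ω *ᵥ (fun _ => c0))
          * dotProduct (fun _ => c0) ((H ω ^ 2) *ᵥ (fun _ => c0))
        = ∑ t : (Fin N × Fin N) × Fin N × Fin N × Fin N,
            c0 ^ 4 * (X (κ t.1) ω *
              (X (κ (t.2.1, t.2.2.2)) ω * X (κ (t.2.2.2, t.2.2.1)) ω)) := by
      intro ω
      rw [hdotP (H ω), hdotP (H ω ^ 2), Finset.sum_mul_sum]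
      simp only [Fintype.sum_prod_type]
      refine Finset.sum_congr rfl fun i _ => Finset.sum_congr rfl fun j _ =>
        Finset.sum_congr rfl fun a _ => Finset.sum_congr rfl fun b _ => ?_
      rw [show H ω ^ 2 = H ω * H ω from pow_two _]
      rw [Matrix.mul_apply, Finset.mul_sum, Finset.mul_sum]
      refine Finset.sum_congr rfl fun k _ => ?_
      rw [hHX ω i j, hHX ω a k, hHX ω k b]
      ring
    have hcov : ∀ q : Q, ∃ t : (Fin N × Fin N) × Fin N × Fin N × Fin N,
        κ t.1 = q ∧ κ (t.2.1, t.2.2.2) = q ∧ κ (t.2.2.2, t.2.2.1) = q :=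
      fun q => ⟨((q.1.1, q.1.2), q.1.1, q.1.1, q.1.2),
        by rw [Prod.mk.eta]; exact (hκq q).1, (hκq q).1, (hκq q).2⟩
    have hb := aux_triple (ι := (Fin N × Fin N) × Fin N × Fin N × Fin N) hXmeas hindep hX0
      hXint hXmul hB0 hX3bound (fun t => κ t.1) (fun t => κ (t.2.1, t.2.2.2))
      (fun t => κ (t.2.2.2, t.2.2.1)) (c := c0 ^ 4) (by positivity) hcov
    simp only [hexp]
    refine le_trans hb ?_
    have hcard : ((Finset.univ.filter fun t : (Fin N × Fin N) × Fin N × Fin N × Fin N =>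
        κ t.1 = κ (t.2.1, t.2.2.2) ∧ κ t.1 = κ (t.2.2.2, t.2.2.1)).card : ℝ)
        ≤ 4 * (N:ℝ) ^ 2 := by
      have h1 : (Finset.univ.filter fun t : (Fin N × Fin N) × Fin N × Fin N × Fin N =>
          κ t.1 = κ (t.2.1, t.2.2.2) ∧ κ t.1 = κ (t.2.2.2, t.2.2.1)).card
          ≤ (Finset.univ : Finset ((Fin N × Fin N) × Bool × Bool)).card := by
        refine Finset.card_le_card_of_injOn
          (fun t => (t.1, decide ((t.2.1, t.2.2.2) = t.1),
            decide ((t.2.2.2, t.2.2.1) = t.1))) (fun t _ => Finset.mem_univ _) ?_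
        intro t ht t' ht' heq
        simp only [Finset.coe_filter, Set.mem_setOf_eq, Finset.mem_univ, true_and] at ht ht'
        obtain ⟨hI1, hI2⟩ := ht
        obtain ⟨hI1', hI2'⟩ := ht'
        rw [Prod.mk.injEq, Prod.mk.injEq, Prod.mk.injEq] at heq
        obtain ⟨⟨hA1, hA2⟩, hd2, hd3⟩ := heq
        have hA : t.1 = t'.1 := Prod.ext hA1 hA2
        have hP2 : (t.2.1, t.2.2.2) = (t'.2.1, t'.2.2.2) :=
          hpin t.1 t'.1 _ _ hI1.symm hI1'.symm hA hd2
        have hP3 : (t.2.2.2, t.2.2.1) = (t'.2.2.2, t'.2.2.1) :=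
          hpin t.1 t'.1 _ _ hI2.symm hI2'.symm hA hd3
        exact Prod.ext hA
          (Prod.ext (Prod.ext_iff.1 hP2).1
            (Prod.ext (Prod.ext_iff.1 hP3).2 (Prod.ext_iff.1 hP2).2))
      have h2 : (Finset.univ : Finset ((Fin N × Fin N) × Bool × Bool)).card
          = N * N * (2 * 2) := by simp [Finset.card_univ]
      have h3 := h1.trans_eq h2
      calc ((Finset.univ.filter fun t : (Fin N × Fin N) × Fin N × Fin N × Fin N =>
            κ t.1 = κ (t.2.1, t.2.2.2) ∧ κ t.1 = κ (t.2.2.2, t.2.2.1)).card : ℝ)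
          ≤ ((N * N * (2 * 2) : ℕ) : ℝ) := by exact_mod_cast h3
        _ = 4 * (N:ℝ) ^ 2 := by push_cast; ring
    have hNne : (N:ℝ) ≠ 0 := hN0.ne'
    have hsNne : sN ≠ 0 := hsN0.ne'
    calc c0 ^ 4 * ((Finset.univ.filter fun t : (Fin N × Fin N) × Fin N × Fin N × Fin N =>
          κ t.1 = κ (t.2.1, t.2.2.2) ∧ κ t.1 = κ (t.2.2.2, t.2.2.1)).card : ℝ)
            * (C₂ / sN) ^ 3
        ≤ c0 ^ 4 * (4 * (N:ℝ) ^ 2) * (C₂ / sN) ^ 3 :=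
          mul_le_mul_of_nonneg_right
            (mul_le_mul_of_nonneg_left hcard (by positivity)) hB0
      _ = 4 * C₂ ^ 3 / ((N:ℝ) * sN) := by
          rw [hc0def, ← hsN2]
          field_simp
      _ ≤ 8 * C₂ ^ 3 / ((N:ℝ) * sN) := by gcongr <;> norm_num
  · -- (iv)
    have hdotX : ∀ ω : Ω, dotProduct (fun _ => c0) (H ω *ᵥ (fun _ => c0))
        = ∑ p : Fin N × Fin N, c0 ^ 2 * X (κ (p.1, p.2)) ω := by
      intro ω
      rw [hdotP (H ω)]
      exact Finset.sum_congr rfl fun p _ => by rw [hHX ω p.1 p.2]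
    have hexp : ∀ ω : Ω, (dotProduct (fun _ => c0) (H ω *ᵥ (fun _ => c0))) ^ 3
        = ∑ t : (Fin N × Fin N) × (Fin N × Fin N) × (Fin N × Fin N),
            c0 ^ 6 * (X (κ (t.1.1, t.1.2)) ω *
              (X (κ (t.2.1.1, t.2.1.2)) ω * X (κ (t.2.2.1, t.2.2.2)) ω)) := by
      intro ω
      rw [hdotX ω, pow_succ, pow_two, Finset.sum_mul_sum]
      simp only [Finset.sum_mul, Finset.mul_sum, Fintype.sum_prod_type]
      refine Finset.sum_congr rfl fun i _ => Finset.sum_congr rfl fun j _ =>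
        Finset.sum_congr rfl fun k _ => Finset.sum_congr rfl fun l _ =>
        Finset.sum_congr rfl fun m _ => Finset.sum_congr rfl fun n _ => ?_
      ring
    have hcov : ∀ q : Q, ∃ t : (Fin N × Fin N) × (Fin N × Fin N) × (Fin N × Fin N),
        κ (t.1.1, t.1.2) = q ∧ κ (t.2.1.1, t.2.1.2) = q ∧ κ (t.2.2.1, t.2.2.2) = q :=
      fun q => ⟨((q.1.1, q.1.2), (q.1.1, q.1.2), (q.1.1, q.1.2)),
        (hκq q).1, (hκq q).1, (hκq q).1⟩
    have hb := aux_triple (ι := (Fin N × Fin N) × (Fin N × Fin N) × (Fin N × Fin N)) hXmeas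
      hindep hX0 hXint hXmul hB0 hX3bound (fun t => κ (t.1.1, t.1.2))
      (fun t => κ (t.2.1.1, t.2.1.2)) (fun t => κ (t.2.2.1, t.2.2.2))
      (c := c0 ^ 6) (by positivity) hcov
    simp only [hexp]
    refine le_trans hb ?_
    have hcard : ((Finset.univ.filter
        fun t : (Fin N × Fin N) × (Fin N × Fin N) × (Fin N × Fin N) =>
        κ (t.1.1, t.1.2) = κ (t.2.1.1, t.2.1.2) ∧
          κ (t.1.1, t.1.2) = κ (t.2.2.1, t.2.2.2)).card : ℝ) ≤ 4 * (N:ℝ) ^ 2 := by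
      have h1 : (Finset.univ.filter
          fun t : (Fin N × Fin N) × (Fin N × Fin N) × (Fin N × Fin N) =>
          κ (t.1.1, t.1.2) = κ (t.2.1.1, t.2.1.2) ∧
            κ (t.1.1, t.1.2) = κ (t.2.2.1, t.2.2.2)).card
          ≤ (Finset.univ : Finset ((Fin N × Fin N) × Bool × Bool)).card := by
        refine Finset.card_le_card_of_injOn
          (fun t => ((t.1.1, t.1.2), decide ((t.2.1.1, t.2.1.2) = (t.1.1, t.1.2)),
            decide ((t.2.2.1, t.2.2.2) = (t.1.1, t.1.2)))) (fun t _ => Finset.mem_univ _) ?_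
        intro t ht t' ht' heq
        simp only [Finset.coe_filter, Set.mem_setOf_eq, Finset.mem_univ, true_and] at ht ht'
        obtain ⟨hI1, hI2⟩ := ht
        obtain ⟨hI1', hI2'⟩ := ht'
        rw [Prod.mk.injEq, Prod.mk.injEq, Prod.mk.injEq] at heq
        obtain ⟨⟨hA1, hA2⟩, hd2, hd3⟩ := heq
        have hA : ((t.1.1 : Fin N), t.1.2) = (t'.1.1, t'.1.2) := by rw [hA1, hA2]
        have hP2 : (t.2.1.1, t.2.1.2) = (t'.2.1.1, t'.2.1.2) :=
          hpin (t.1.1, t.1.2) (t'.1.1, t'.1.2) _ _ hI1.symm hI1'.symm hA hd2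
        have hP3 : (t.2.2.1, t.2.2.2) = (t'.2.2.1, t'.2.2.2) :=
          hpin (t.1.1, t.1.2) (t'.1.1, t'.1.2) _ _ hI2.symm hI2'.symm hA hd3
        refine Prod.ext ?_ (Prod.ext ?_ ?_)
        · exact Prod.ext hA1 hA2
        · exact Prod.ext (Prod.ext_iff.1 hP2).1 (Prod.ext_iff.1 hP2).2
        · exact Prod.ext (Prod.ext_iff.1 hP3).1 (Prod.ext_iff.1 hP3).2
      have h2 : (Finset.univ : Finset ((Fin N × Fin N) × Bool × Bool)).card
          = N * N * (2 * 2) := by simp [Finset.card_univ]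
      have h3 := h1.trans_eq h2
      calc ((Finset.univ.filter
            fun t : (Fin N × Fin N) × (Fin N × Fin N) × (Fin N × Fin N) =>
            κ (t.1.1, t.1.2) = κ (t.2.1.1, t.2.1.2) ∧
              κ (t.1.1, t.1.2) = κ (t.2.2.1, t.2.2.2)).card : ℝ)
          ≤ ((N * N * (2 * 2) : ℕ) : ℝ) := by exact_mod_cast h3
        _ = 4 * (N:ℝ) ^ 2 := by push_cast; ring
    have hNne : (N:ℝ) ≠ 0 := hN0.ne'
    have hsNne : sN ≠ 0 := hsN0.ne'
    calc c0 ^ 6 * ((Finset.univ.filter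
          fun t : (Fin N × Fin N) × (Fin N × Fin N) × (Fin N × Fin N) =>
          κ (t.1.1, t.1.2) = κ (t.2.1.1, t.2.1.2) ∧
            κ (t.1.1, t.1.2) = κ (t.2.2.1, t.2.2.2)).card : ℝ) * (C₂ / sN) ^ 3
        ≤ c0 ^ 6 * (4 * (N:ℝ) ^ 2) * (C₂ / sN) ^ 3 :=
          mul_le_mul_of_nonneg_right
            (mul_le_mul_of_nonneg_left hcard (by positivity)) hB0
      _ = 4 * C₂ ^ 3 / ((N:ℝ) ^ 2 * sN) := by
          rw [hc0def, ← hsN2]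
          field_simp
      _ ≤ 8 * C₂ ^ 3 / ((N:ℝ) ^ 2 * sN) := by gcongr <;> norm_num
end
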